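/- arXiv:2307.03037 — 4 statements merged into one kernel-verified Lean document; each statement's English description precedes it below -/
import Mathlib

section
/- Let p be a prime and i ≥ 0 an integer. Then the integer p^{i+1}! / ((p^i!)^p · p!) is not divisible by p. -/
/-- Let `p` be a prime and `i ≥ 0`. Then `(p^i!)^p * p!` divides `p^(i+1)!` and the
integer `p^(i+1)! / ((p^i!)^p * p!)` is not divisible by `p`. -/
theorem stmt1 (p i : ℕ) (hp : p.Prime) :
    (Nat.factorial (p ^ i) ^ p * Nat.factorial p) ∣ Nat.factorial (p ^ (i + 1)) ∧
    ¬ p ∣ Nat.factorial (p ^ (i + 1)) / (Nat.factorial (p ^ i) ^ p * Nat.factorial p) := by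
  haveI : Fact p.Prime := ⟨hp⟩
  have hpn : (p ^ i : ℕ) ≠ 0 := pow_ne_zero _ hp.pos.ne'
  have key := Nat.uniformBell_mul_eq p hpn
  have hpow : p * p ^ i = p ^ (i + 1) := by ring
  rw [hpow] at key
  set B := Nat.uniformBell p (p ^ i) with hB
  have hBne : B ≠ 0 := by
    intro h
    have := key
    rw [h] at this
    simp [Nat.factorial_ne_zero] at this
    exact (Nat.factorial_ne_zero _) this.symm
  have hdvd : (Nat.factorial (p ^ i) ^ p * Nat.factorial p) ∣ Nat.factorial (p ^ (i + 1)) :=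
    ⟨B, by rw [← key]; ring⟩
  refine ⟨hdvd, ?_⟩
  have hquot : Nat.factorial (p ^ (i + 1)) / (Nat.factorial (p ^ i) ^ p * Nat.factorial p) = B := by
    rw [← key]; rw [show B * (p ^ i).factorial ^ p * p.factorial
      = ((p ^ i).factorial ^ p * p.factorial) * B by ring]
    exact Nat.mul_div_cancel_left _ (Nat.mul_pos (pow_pos (Nat.factorial_pos _) _)
      (Nat.factorial_pos _))
  rw [hquot]
  -- valuation computation
  have hvfac : ∀ k : ℕ, p * padicValNat p (Nat.factorial (p ^ k)) + 1
      = p ^ k + padicValNat p (Nat.factorial (p ^ k)) := by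
    intro k
    induction k with
    | zero => simp
    | succ k ih =>
        have h1 : padicValNat p (Nat.factorial (p ^ (k + 1)))
            = p ^ k + padicValNat p (Nat.factorial (p ^ k)) := by
          rw [show p ^ (k + 1) = p * p ^ k by ring,
            padicValNat_factorial_mul (p := p) (p ^ k)]
          omega
        rw [h1]
        have : p * (p ^ k + padicValNat p (Nat.factorial (p ^ k)))
            = p ^ (k + 1) + (p * padicValNat p (Nat.factorial (p ^ k))) := by ring
        omega
  have hvp : padicValNat p (Nat.factorial p) = 1 := by
    have := padicValNat_factorial_mul (p := p) 1
    simpa using this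
  -- take valuations of key equation
  have hval : padicValNat p B + (p * padicValNat p (Nat.factorial (p ^ i)) + 1)
      = p ^ i + padicValNat p (Nat.factorial (p ^ i)) := by
    have h2 : padicValNat p (B * Nat.factorial (p ^ i) ^ p * Nat.factorial p)
        = padicValNat p (Nat.factorial (p ^ (i + 1))) := by rw [key]
    rw [padicValNat.mul (Nat.mul_ne_zero hBne (pow_ne_zero _ (Nat.factorial_ne_zero _)))
        (Nat.factorial_ne_zero _),
      padicValNat.mul hBne (pow_ne_zero _ (Nat.factorial_ne_zero _)),
      padicValNat.pow _ _, hvp] at h2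
    have h3 : padicValNat p (Nat.factorial (p ^ (i + 1)))
        = p ^ i + padicValNat p (Nat.factorial (p ^ i)) := by
      rw [show p ^ (i + 1) = p * p ^ i by ring,
        padicValNat_factorial_mul (p := p) (p ^ i)]
      omega
    omega
  have hvB : padicValNat p B = 0 := by have := hvfac i; omega
  intro hdvdB
  have := one_le_padicValNat_of_dvd hBne hdvdB
  omega
end

section
/- Let p be a prime and s ≥ 1. Then p^s! / (p^{p^{s−1}} · p^{s−1}!) ≡ −1 (mod p). That is, the number of ways to partition a set of p^s elements into p^{s−1} blocks of size p is congruent to −1 modulo p. -/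
open Finset

lemma fact_add_prod (a m : ℕ) :
    Nat.factorial (a + m) = Nat.factorial a * ∏ i ∈ range m, (a + i + 1) := by
  induction m with
  | zero => simp
  | succ n ih =>
      rw [prod_range_succ, ← mul_assoc, ← ih, ← Nat.add_assoc, Nat.factorial_succ, mul_comm]

lemma ioo_eq_ico (p : ℕ) : Ioo 0 p = Ico 1 p := by
  ext x; simp only [mem_Ioo, mem_Ico]; omega

lemma key_fact (p : ℕ) (hp : 0 < p) (n : ℕ) :
    Nat.factorial (p * n) =
      p ^ n * Nat.factorial n * ∏ k ∈ range n, ∏ j ∈ Ioo 0 p, (p * k + j) := by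
  induction n with
  | zero => simp
  | succ n ih =>
      have h1 : p * (n + 1) = p * n + p := by ring
      rw [h1, fact_add_prod, ih, prod_range_succ]
      have h2 : ∏ i ∈ range p, (p * n + i + 1) =
          (∏ j ∈ Ioo 0 p, (p * n + j)) * (p * (n + 1)) := by
        rw [ioo_eq_ico, prod_Ico_eq_prod_range]
        obtain ⟨q, rfl⟩ : ∃ q, p = q + 1 := ⟨p - 1, by omega⟩
        rw [prod_range_succ]
        congr 1
        · apply Finset.prod_congr (by simp) fun i _ => by omega
      rw [h2, Nat.factorial_succ]
      ring

/-- For a prime `p` and `s ≥ 1`, `p^(p^(s-1)) * p^(s-1)!` divides `p^s!` and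
`p^s! / (p^(p^(s-1)) * p^(s-1)!) ≡ -1 (mod p)`. -/
theorem stmt7 (p s : ℕ) (hp : p.Prime) (hs : 1 ≤ s) :
    (p ^ p ^ (s - 1) * Nat.factorial (p ^ (s - 1))) ∣ Nat.factorial (p ^ s) ∧
    ((Nat.factorial (p ^ s) / (p ^ p ^ (s - 1) * Nat.factorial (p ^ (s - 1))) : ℕ) :
        ZMod p) = -1 := by
  have hps : p ^ s = p * p ^ (s - 1) := by
    rw [← pow_succ']
    congr 1
    omega
  set n := p ^ (s - 1) with hn
  have hkey := key_fact p hp.pos n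
  rw [← hps] at hkey
  have hpos : 0 < p ^ n * Nat.factorial n :=
    Nat.mul_pos (Nat.pow_pos hp.pos) (Nat.factorial_pos n)
  refine ⟨⟨_, hkey⟩, ?_⟩
  rw [hkey, Nat.mul_div_cancel_left _ hpos]
  simp_rw [Nat.cast_prod]
  have hcast : ∀ k ∈ range n, (∏ j ∈ Ioo 0 p, ((p * k + j : ℕ) : ZMod p)) =
      ∏ j ∈ Ioo 0 p, ((j : ℕ) : ZMod p) := by
    intro k _
    refine Finset.prod_congr rfl fun j _ => ?_
    push_cast
    simp [ZMod.natCast_self]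
  rw [Finset.prod_congr rfl hcast, Finset.prod_const, Finset.card_range]
  have hwil : (∏ j ∈ Ioo 0 p, ((j : ℕ) : ZMod p)) = -1 := by
    haveI : Fact p.Prime := ⟨hp⟩
    rw [← Finset.prod_natCast]
    have : Ioo 0 p = Ico 1 (p - 1 + 1) := by
      rw [ioo_eq_ico, Nat.sub_add_cancel hp.pos]
    rw [this, Finset.prod_Ico_id_eq_factorial, ZMod.wilsons_lemma]
  rw [hwil]
  rcases hp.eq_two_or_odd' with h2 | hodd
  · subst h2
    rw [show (-1 : ZMod 2) = 1 from rfl, one_pow]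
  · exact Odd.neg_one_pow (hodd.pow)
end

section
/- Let σ ∈ S_{st} be a product of s disjoint t-cycles whose union of supports is all of {1,…,st}. Then the centralizer of σ in S_{st} contains an st-cycle. -/
open Equiv Equiv.Perm
open Fin.NatCast Fin.CommRing

lemma auxFinRotatePow (n k : ℕ) : ∀ x : Fin (n + 1),
    ((finRotate (n + 1)) ^ k) x = x + (k : Fin (n + 1)) := by
  induction k with
  | zero => intro x; simp
  | succ k ih =>
    intro x
    rw [pow_succ, Equiv.Perm.mul_apply, finRotate_succ_apply, ih, Nat.cast_add, Nat.cast_one]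
    ring

lemma auxFinRotatePow' (n : ℕ) [NeZero n] (k : ℕ) (x : Fin n) :
    ((finRotate n) ^ k) x = x + (k : Fin n) := by
  cases n with
  | zero => exact x.elim0
  | succ m => exact auxFinRotatePow m k x

def auxEquiv {s t : ℕ} (a : Fin s) : Fin t ≃ {x : Fin s × Fin t // x.1 = a} where
  toFun b := ⟨(a, b), rfl⟩
  invFun x := (x : Fin s × Fin t).2
  left_inv b := rfl
  right_inv := fun ⟨⟨u, v⟩, h⟩ => by subst h; rfl

lemma auxProdExtendRight {s t : ℕ} (a : Fin s) (g : Equiv.Perm (Fin t)) :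
    Equiv.Perm.prodExtendRight a g = g.extendDomain (auxEquiv a) := by
  apply Equiv.ext
  rintro ⟨u, v⟩
  by_cases h : u = a
  · subst h
    rw [Equiv.Perm.prodExtendRight_apply_eq,
        Equiv.Perm.extendDomain_apply_subtype g (auxEquiv u) (show (u, v).1 = u from rfl)]
    rfl
  · rw [Equiv.Perm.prodExtendRight_apply_ne g h,
        Equiv.Perm.extendDomain_apply_not_subtype g (auxEquiv a) h]

lemma auxArith (s t : ℕ) (hs : 1 ≤ s) (ht2 : 2 ≤ t) (a : Fin s) (b : Fin t) :
    ((finRotate (s * t)) ^ s) (finCongr (mul_comm t s) (finProdFinEquiv (b, a)))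
      = finCongr (mul_comm t s) (finProdFinEquiv (finRotate t b, a)) := by
  haveI : NeZero (s * t) := ⟨Nat.mul_ne_zero (by omega) (by omega)⟩
  obtain ⟨t', rfl⟩ : ∃ t', t = t' + 2 := ⟨t - 2, by omega⟩
  rw [auxFinRotatePow']
  apply Fin.ext
  rw [Fin.add_def]
  simp only [finCongr_apply, Fin.coe_cast, finProdFinEquiv_apply_val, finRotate_succ_apply,
    Fin.add_def, Fin.val_one]
  -- goal should now be numeric
  have hsv : (↑s : Fin (s * (t' + 2))).val = s := by
    rw [Fin.val_natCast]
    exact Nat.mod_eq_of_lt (by nlinarith)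
  rw [hsv]
  have ha : a.val < s := a.isLt
  have hb : b.val < t' + 2 := b.isLt
  have hms : s * (b.val + 1) = s * b.val + s := by ring
  by_cases hb1 : b.val + 1 < t' + 2
  · rw [Nat.mod_eq_of_lt hb1, Nat.mod_eq_of_lt (by nlinarith)]
    omega
  · have hbt : b.val + 1 = t' + 2 := by omega
    rw [hbt, Nat.mod_self, Nat.mul_zero]
    have h2 : s * (b.val + 1) = s * (t' + 2) := by rw [hbt]
    have h5 : a.val + s * b.val + s = a.val + s * (t' + 2) := by omega
    have h6 : (a.val + s * (t' + 2)) % (s * (t' + 2)) = a.val % (s * (t' + 2)) :=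
      Nat.add_mod_right _ _
    have h4 : a.val % (s * (t' + 2)) = a.val := Nat.mod_eq_of_lt (by nlinarith)
    rw [h5, h6, h4]
    omega

/-- If `σ ∈ S_{st}` is a product of `s` pairwise disjoint `t`-cycles whose supports
cover all of the `st` points, then the centralizer of `σ` contains an `st`-cycle. -/
theorem stmt10 (s t : ℕ) (hs : 1 ≤ s) (ht : 1 ≤ t) (σ : Equiv.Perm (Fin (s * t)))
    (h : ∃ l : List (Equiv.Perm (Fin (s * t))), l.length = s ∧
      (∀ τ ∈ l, τ.IsCycle ∧ τ.support.card = t) ∧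
      List.Pairwise Equiv.Perm.Disjoint l ∧ σ = l.prod ∧ σ.support = Finset.univ) :
    ∃ c : Equiv.Perm (Fin (s * t)), c.IsCycle ∧ c.support.card = s * t ∧
      Commute c σ := by
  classical
  obtain ⟨l, hlen, hcyc, hdisj, hσ, hsupp⟩ := h
  -- t ≥ 2
  have hlne : l ≠ [] := by intro h0; rw [h0] at hlen; simp at hlen; omega
  obtain ⟨τ0, hτ0⟩ := List.exists_mem_of_ne_nil l hlne
  have ht2 : 2 ≤ t := by
    have h2 := (hcyc τ0 hτ0).1.two_le_card_support
    rw [(hcyc τ0 hτ0).2] at h2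
    exact h2
  have htst : t ≤ s * t := Nat.le_mul_of_pos_left t hs
  have hN2 : 2 ≤ s * t := le_trans ht2 htst
  haveI : NeZero (s * t) := ⟨by omega⟩
  -- cycle type of σ
  have hσtype : σ.cycleType = Multiset.replicate s t := by
    rw [Equiv.Perm.cycleType_eq l hσ.symm (fun τ hτ => (hcyc τ hτ).1) hdisj]
    have hmap : l.map (Finset.card ∘ Equiv.Perm.support) = List.replicate s t := by
      rw [List.eq_replicate_iff]
      refine ⟨by rw [List.length_map, hlen], ?_⟩
      intro b hb
      obtain ⟨τ, hτ, rfl⟩ := List.mem_map.mp hb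
      exact (hcyc τ hτ).2
    rw [hmap, Multiset.coe_replicate]
  -- the model cycles on the product type
  set g : Equiv.Perm (Fin t) := finRotate t with hgdef
  have hgc : g.IsCycle := isCycle_finRotate_of_le ht2
  have hgt : g.cycleType = {t} := cycleType_finRotate_of_le ht2
  set c : Fin s → Equiv.Perm (Fin s × Fin t) := fun a => Equiv.Perm.prodExtendRight a g
    with hcdef
  have hccyc : ∀ a, (c a).IsCycle := by
    intro a; rw [hcdef]; simp only []
    rw [auxProdExtendRight]; exact hgc.extendDomain _
  have hcsupp : ∀ a, (c a).support.card = t := by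
    intro a
    have h1 : (c a).cycleType = {t} := by
      rw [hcdef]; simp only []; rw [auxProdExtendRight, Equiv.Perm.cycleType_extendDomain, hgt]
    have h2 := (hccyc a).cycleType
    rw [h1] at h2
    exact (Multiset.singleton_inj.mp h2.symm)
  have hcd : ∀ a b : Fin s, a ≠ b → (c a).Disjoint (c b) := by
    intro a b hab
    intro ⟨u, v⟩
    by_cases hu : u = a
    · right
      exact Equiv.Perm.prodExtendRight_apply_ne g (by rw [hu]; exact hab) v
    · left
      exact Equiv.Perm.prodExtendRight_apply_ne g hu v
  -- the model permutation π
  set π : Equiv.Perm (Fin s × Fin t) := Equiv.prodCongrRight (fun _ : Fin s => g) with hπdef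
  have hprod : ((List.finRange s).map c).prod = π :=
    Equiv.Perm.prod_prodExtendRight _ (List.nodup_finRange s) (List.mem_finRange)
  have hπtype : π.cycleType = Multiset.replicate s t := by
    rw [Equiv.Perm.cycleType_eq ((List.finRange s).map c) hprod
      (by intro τ hτ; obtain ⟨a, _, rfl⟩ := List.mem_map.mp hτ; exact hccyc a)
      ((List.pairwise_map).mpr ((List.nodup_finRange s).imp (fun hne => hcd _ _ hne)))]
    have hmap : ((List.finRange s).map c).map (Finset.card ∘ Equiv.Perm.support)
        = List.replicate s t := by
      rw [List.eq_replicate_iff]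
      refine ⟨by simp, ?_⟩
      intro b hb
      obtain ⟨τ, hτ, rfl⟩ := List.mem_map.mp hb
      obtain ⟨a, _, rfl⟩ := List.mem_map.mp hτ
      exact hcsupp a
    rw [hmap, Multiset.coe_replicate]
  -- transport to Fin (s * t)
  set E : Fin s × Fin t ≃ Fin (s * t) :=
    (Equiv.prodComm _ _).trans (finProdFinEquiv.trans (finCongr (mul_comm t s))) with hEdef
  set E' : Fin s × Fin t ≃ {x : Fin (s * t) // (fun _ => True) x} :=
    E.trans (Equiv.subtypeUnivEquiv (fun _ => trivial)).symm with hE'def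
  set π' : Equiv.Perm (Fin (s * t)) := π.extendDomain E' with hπ'def
  have hπ'type : π'.cycleType = Multiset.replicate s t := by
    rw [hπ'def, Equiv.Perm.cycleType_extendDomain, hπtype]
  -- conjugate
  have hconj : IsConj π' σ := Equiv.Perm.isConj_iff_cycleType_eq.mpr (by
    rw [hπ'type, hσtype])
  obtain ⟨u, hu⟩ := hconj
  set v : Equiv.Perm (Fin (s * t)) := (u : Equiv.Perm (Fin (s * t))) with hvdef
  have hv : v * π' = σ * v := hu
  have hσeq : v * π' * v⁻¹ = σ := by rw [hv, mul_inv_cancel_right]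
  -- the big cycle
  set C : Equiv.Perm (Fin (s * t)) := finRotate (s * t) with hCdef
  have hCc : C.IsCycle := isCycle_finRotate_of_le hN2
  have hCsupp : C.support = Finset.univ := support_finRotate_of_le hN2
  have key2 : ∀ (a : Fin s) (b : Fin t), (C ^ s) (E (a, b)) = E (a, g b) := by
    intro a b
    have h3 : E (a, b) = finCongr (mul_comm t s) (finProdFinEquiv (b, a)) := rfl
    have h4 : E (a, g b) = finCongr (mul_comm t s) (finProdFinEquiv (g b, a)) := rfl
    rw [h3, h4, hCdef, hgdef]
    exact auxArith s t hs ht2 a b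
  have key : C ^ s = π' := by
    apply Equiv.ext
    intro x
    have h1 : π' x = E (π (E.symm x)) := by
      rw [hπ'def, Equiv.Perm.extendDomain_apply_subtype π E' (trivial : (fun _ => True) x)]
      simp [hE'def, Equiv.subtypeUnivEquiv]
    have h5 : π (E.symm x) = ((E.symm x).1, g (E.symm x).2) := rfl
    rw [h1, h5]
    have h6 := key2 (E.symm x).1 (E.symm x).2
    simpa only [Prod.mk.eta, Equiv.apply_symm_apply] using h6
  refine ⟨v * C * v⁻¹, hCc.conj, ?_, ?_⟩
  · rw [Equiv.Perm.support_conj, Finset.card_map, hCsupp, Finset.card_univ, Fintype.card_fin]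
  · have hcs : σ = (v * C * v⁻¹) ^ s := by rw [conj_pow, key, hσeq]
    rw [hcs]
    exact (Commute.refl _).pow_right s
end

section
/- Let k be a field of characteristic p > 0 and V a finite-dimensional vector space with the divided power algebra D(V) (reduction mod p of the divided power ℤ-form inside S(V_ℚ)). Let B = ⊕_{r≥2} D_1^r(V), the span of divided power monomials of degree ≥ 2 with all exponents < p. Then B is closed under multiplication and stable under all divided power operations γ_i, i ≥ 1 (i.e., γ_i(x) ∈ B for x ∈ B). -/
private lemma cpow_dvd {p t n : ℕ} (hp : p.Prime) (ht : 1 ≤ t) (htp : t < p)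
    (hnt : p ≤ n * t) :
    p ∣ ∏ s ∈ Finset.range n, Nat.choose (s * t + t) t := by
  have hst : (p - 1) / t * t < p := by
    have h := Nat.div_mul_le_self (p - 1) t
    omega
  have hst2 : p ≤ (p - 1) / t * t + t := by
    have h1 := Nat.div_add_mod' (p - 1) t
    have h2 := Nat.mod_lt (p - 1) (show 0 < t by omega)
    omega
  have hs0n : (p - 1) / t ∈ Finset.range n := by
    rw [Finset.mem_range]
    by_contra h
    push_neg at h
    have : n * t ≤ (p - 1) / t * t := Nat.mul_le_mul_right t h
    omega
  exact (hp.dvd_choose htp (by omega) hst2).trans (Finset.dvd_prod_of_mem _ hs0n)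

private lemma ub_dvd {p t n : ℕ} (hp : p.Prime) (ht2 : 2 ≤ t) (htp : t < p)
    (hnt : p ≤ n * t) :
    p ∣ Nat.factorial (n * t) / (Nat.factorial t ^ n * Nat.factorial n) := by
  haveI : Fact p.Prime := ⟨hp⟩
  have ht0 : t ≠ 0 := by omega
  have hn1 : 1 ≤ n := by
    rcases Nat.eq_zero_or_pos n with rfl | h
    · simp at hnt; omega
    · exact h
  rw [← Nat.uniformBell_eq_div n ht0]
  have hub : Nat.uniformBell n t * Nat.factorial t ^ n * Nat.factorial n
      = Nat.factorial (n * t) := Nat.uniformBell_mul_eq n ht0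
  have hub0 : Nat.uniformBell n t ≠ 0 := by
    intro h
    rw [h, zero_mul, zero_mul] at hub
    exact (Nat.factorial_ne_zero _) hub.symm
  set b := Nat.log p (n * t) + 1 with hb
  have hnt' : n ≤ n * t := Nat.le_mul_of_pos_right n (by omega)
  have hvfac : padicValNat p (Nat.factorial (n * t)) = ∑ i ∈ Finset.Ico 1 b, (n * t) / p ^ i :=
    padicValNat_factorial (Nat.lt_succ_self _)
  have hvn : padicValNat p (Nat.factorial n) = ∑ i ∈ Finset.Ico 1 b, n / p ^ i :=
    padicValNat_factorial (lt_of_le_of_lt (Nat.log_mono_right hnt') (Nat.lt_succ_self _))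
  have hvt : padicValNat p (Nat.factorial t ^ n) = 0 := by
    apply padicValNat.eq_zero_of_not_dvd
    intro h
    have := hp.dvd_of_dvd_pow h
    rw [hp.dvd_factorial] at this
    omega
  have heq : padicValNat p (Nat.factorial (n * t)) =
      padicValNat p (Nat.uniformBell n t) + padicValNat p (Nat.factorial t ^ n)
        + padicValNat p (Nat.factorial n) := by
    rw [← hub, padicValNat.mul (by positivity) (Nat.factorial_ne_zero _),
      padicValNat.mul hub0 (by positivity)]
  have hkey : ∑ i ∈ Finset.Ico 1 b, n / p ^ i < ∑ i ∈ Finset.Ico 1 b, (n * t) / p ^ i := by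
    apply Finset.sum_lt_sum
    · exact fun i _ => Nat.div_le_div_right hnt'
    · refine ⟨1, ?_, ?_⟩
      · rw [Finset.mem_Ico]
        exact ⟨le_rfl, by have := Nat.log_pos hp.one_lt hnt; omega⟩
      · rw [pow_one]
        rcases lt_or_ge n p with h | h
        · have h1 : n / p = 0 := Nat.div_eq_of_lt h
          have h2 : 1 ≤ n * t / p := (Nat.one_le_div_iff hp.pos).mpr hnt
          omega
        · have h1 : 1 ≤ n / p := (Nat.one_le_div_iff hp.pos).mpr h
          have h2 : n / p + n / p ≤ (n + n) / p := by
            rw [Nat.le_div_iff_mul_le hp.pos, add_mul]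
            exact Nat.add_le_add (Nat.div_mul_le_self n p) (Nat.div_mul_le_self n p)
          have h3 : n + n ≤ n * t := by nlinarith
          have h4 : (n + n) / p ≤ n * t / p := Nat.div_le_div_right h3
          omega
  apply dvd_of_one_le_padicValNat
  omega



/-- Let `k` be a field of characteristic `p > 0` and let `A` be the divided power
algebra `D(V)` of a vector space `V` with basis `y_1, …, y_m`: a commutative
`k`-algebra of characteristic `p` spanned by the divided power monomials
`Π_i γ_{t_i}(y_i)`, equipped with divided power operations `γ_i` on an ideal `I`
containing the `y_i`, satisfying the usual divided power axioms
`γ_0(x) = 1`, `γ_1(x) = x`, `γ_i(x) ∈ I` for `i ≥ 1`,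
`γ_i(x+y) = Σ_j γ_j(x) γ_{i-j}(y)`, `γ_i(xy) = x^i γ_i(y)`,
`γ_i(x) γ_j(x) = C(i+j,i) γ_{i+j}(x)` and
`γ_i(γ_j(x)) = ((ij)!/((j!)^i i!)) γ_{ij}(x)`.
Let `B = ⊕_{r ≥ 2} D_1^r(V)` be the `k`-span of the divided power monomials of degree
`≥ 2 ` all of whose exponents are `< p`. Then `B` is closed under multiplication and
stable under all divided power operations `γ_i`, `i ≥ 1`. -/
theorem stmt12 {k A : Type*} [Field k] [CommRing A] [Algebra k A]
    (p : ℕ) (hp : p.Prime) [CharP k p] [CharP A p]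
    (I : Ideal A) (γ : ℕ → A → A)
    (hγ0 : ∀ x ∈ I, γ 0 x = 1)
    (hγ1 : ∀ x ∈ I, γ 1 x = x)
    (hmem : ∀ i, 1 ≤ i → ∀ x ∈ I, γ i x ∈ I)
    (hadd : ∀ i, ∀ x ∈ I, ∀ y ∈ I,
      γ i (x + y) = ∑ j ∈ Finset.range (i + 1), γ j x * γ (i - j) y)
    (hmul : ∀ i, ∀ x : A, ∀ y ∈ I, γ i (x * y) = x ^ i * γ i y)
    (hpow : ∀ i j, ∀ x ∈ I,
      γ i x * γ j x = ((Nat.choose (i + j) i : ℕ) : A) * γ (i + j) x)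
    (hcomp : ∀ i j, ∀ x ∈ I,
      γ i (γ j x) =
        ((Nat.factorial (i * j) / (Nat.factorial j ^ i * Nat.factorial i) : ℕ) : A)
          * γ (i * j) x)
    (m : ℕ) (y : Fin m → A) (hy : ∀ i, y i ∈ I)
    (hbasis : Submodule.span k
      {a : A | ∃ t : Fin m → ℕ, a = ∏ i, γ (t i) (y i)} = ⊤)
    (B : Submodule k A)
    (hB : B = Submodule.span k
      {a : A | ∃ t : Fin m → ℕ, (∀ i, t i < p) ∧ 2 ≤ ∑ i, t i ∧
        a = ∏ i, γ (t i) (y i)}) :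
    (∀ a ∈ B, ∀ b ∈ B, a * b ∈ B) ∧ (∀ i, 1 ≤ i → ∀ a ∈ B, γ i a ∈ B) := by
  subst hB
  set S : Set A := {a : A | ∃ t : Fin m → ℕ, (∀ i, t i < p) ∧ 2 ≤ ∑ i, t i ∧
        a = ∏ i, γ (t i) (y i)} with hS
  have hp2 : 2 ≤ p := hp.two_le
  -- casting helper
  have cast_smul : ∀ (N : ℕ) (z : A), (N : A) * z = (N : k) • z := by
    intro N z
    rw [Algebra.smul_def, map_natCast]
  -- product of two generators
  have hprod : ∀ a ∈ S, ∀ b ∈ S, a * b ∈ Submodule.span k S := by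
    rintro _ ⟨t, htp, ht2, rfl⟩ _ ⟨s, hsp, hs2, rfl⟩
    rw [← Finset.prod_mul_distrib]
    have hre : ∀ i ∈ Finset.univ, γ (t i) (y i) * γ (s i) (y i) =
        ((Nat.choose (t i + s i) (t i) : ℕ) : A) * γ (t i + s i) (y i) :=
      fun i _ => hpow _ _ _ (hy i)
    rw [Finset.prod_congr rfl hre, Finset.prod_mul_distrib, ← Nat.cast_prod]
    by_cases hall : ∀ i, t i + s i < p
    · rw [cast_smul]
      refine Submodule.smul_mem _ _ (Submodule.subset_span ?_)
      refine ⟨fun i => t i + s i, hall, ?_, rfl⟩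
      rw [Finset.sum_add_distrib]
      omega
    · push_neg at hall
      obtain ⟨i0, hi0⟩ := hall
      have hdvd : p ∣ ∏ i, Nat.choose (t i + s i) (t i) := by
        refine (hp.dvd_choose (htp i0) ?_ hi0).trans
          (Finset.dvd_prod_of_mem _ (Finset.mem_univ i0))
        have := hsp i0
        omega
      rw [(CharP.cast_eq_zero_iff A p _).mpr hdvd, zero_mul]
      exact Submodule.zero_mem _
  -- multiplication closure
  have hmulB : ∀ a ∈ Submodule.span k S, ∀ b ∈ Submodule.span k S,
      a * b ∈ Submodule.span k S := by
    intro a ha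
    induction ha using Submodule.span_induction with
    | mem x hx =>
      intro b hb
      induction hb using Submodule.span_induction with
      | mem z hz => exact hprod x hx z hz
      | zero => rw [mul_zero]; exact Submodule.zero_mem _
      | add z w _ _ ihz ihw => rw [mul_add]; exact Submodule.add_mem _ ihz ihw
      | smul c z _ ihz => rw [mul_smul_comm]; exact Submodule.smul_mem _ _ ihz
    | zero => intro b hb; rw [zero_mul]; exact Submodule.zero_mem _
    | add z w _ _ ihz ihw =>
      intro b hb
      rw [add_mul]
      exact Submodule.add_mem _ (ihz b hb) (ihw b hb)
    | smul c z _ ihz =>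
      intro b hb
      rw [smul_mul_assoc]
      exact Submodule.smul_mem _ _ (ihz b hb)
  -- powers of a single divided power
  have hpow_gen : ∀ (t : ℕ) (v : A), v ∈ I → ∀ n : ℕ,
      γ t v ^ n = ((∏ s ∈ Finset.range n, Nat.choose (s * t + t) t : ℕ) : A)
        * γ (n * t) v := by
    intro t v hv n
    induction n with
    | zero => simp [hγ0 v hv]
    | succ n ih =>
      rw [pow_succ, ih, Finset.prod_range_succ, mul_assoc, hpow (n * t) t v hv,
        Nat.choose_symm_add]
      push_cast
      rw [Nat.succ_mul]
      ring
  -- γ n of a generator monomial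
  have hmono : ∀ (t : Fin m → ℕ), (∀ i, t i < p) → 2 ≤ ∑ i, t i → ∀ n, 1 ≤ n →
      γ n (∏ i, γ (t i) (y i)) ∈ Submodule.span k S := by
    intro t htp ht2 n hn
    have hcalc : ∀ j0 : Fin m, 1 ≤ t j0 →
        γ n (∏ i, γ (t i) (y i)) =
          (((Nat.factorial (n * t j0) / (Nat.factorial (t j0) ^ n * Nat.factorial n)) *
            ∏ i ∈ Finset.univ.erase j0,
              ∏ s ∈ Finset.range n, Nat.choose (s * t i + t i) (t i) : ℕ) : A)
            * ∏ i, γ (n * t i) (y i) := by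
      intro j0 hj0
      have hsplit : ∏ i, γ (t i) (y i) =
          (∏ i ∈ Finset.univ.erase j0, γ (t i) (y i)) * γ (t j0) (y j0) :=
        ((Finset.mul_prod_erase Finset.univ (fun i => γ (t i) (y i))
          (Finset.mem_univ j0)).symm).trans (mul_comm _ _)
      rw [hsplit, hmul n _ _ (hmem _ hj0 _ (hy j0)), hcomp n (t j0) _ (hy j0),
        ← Finset.prod_pow]
      have hre : ∀ i ∈ Finset.univ.erase j0, γ (t i) (y i) ^ n =
          ((∏ s ∈ Finset.range n, Nat.choose (s * t i + t i) (t i) : ℕ) : A)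
            * γ (n * t i) (y i) := fun i _ => hpow_gen (t i) (y i) (hy i) n
      rw [Finset.prod_congr rfl hre, Finset.prod_mul_distrib, ← Nat.cast_prod,
        ← Finset.mul_prod_erase Finset.univ (fun i => γ (n * t i) (y i))
          (Finset.mem_univ j0)]
      push_cast
      ring
    by_cases hall : ∀ i, n * t i < p
    · have hj0 : ∃ j0, 1 ≤ t j0 := by
        by_contra h
        push_neg at h
        have : ∑ i, t i = 0 := Finset.sum_eq_zero (fun i _ => by have := h i; omega)
        omega
      obtain ⟨j0, hj0⟩ := hj0
      rw [hcalc j0 hj0, cast_smul]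
      refine Submodule.smul_mem _ _ (Submodule.subset_span ?_)
      refine ⟨fun i => n * t i, hall, ?_, rfl⟩
      rw [← Finset.mul_sum]
      calc 2 ≤ ∑ i, t i := ht2
        _ ≤ n * ∑ i, t i := Nat.le_mul_of_pos_left _ (by omega)
    · push_neg at hall
      obtain ⟨j1, hj1⟩ := hall
      have hj1t : 1 ≤ t j1 := by
        rcases Nat.eq_zero_or_pos (t j1) with h | h
        · rw [h, mul_zero] at hj1; omega
        · exact h
      rw [hcalc j1 hj1t]
      have hdvd : p ∣ Nat.factorial (n * t j1) /
            (Nat.factorial (t j1) ^ n * Nat.factorial n) *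
          ∏ i ∈ Finset.univ.erase j1,
            ∏ s ∈ Finset.range n, Nat.choose (s * t i + t i) (t i) := by
        rcases le_or_gt 2 (t j1) with h2 | h1
        · exact Dvd.dvd.mul_right (ub_dvd hp h2 (htp j1) hj1) _
        · have htj1 : t j1 = 1 := by omega
          have hnp : p ≤ n := by rw [htj1, mul_one] at hj1; exact hj1
          have hj2 : ∃ j2 ∈ Finset.univ.erase j1, 1 ≤ t j2 := by
            by_contra h
            push_neg at h
            have hz : ∑ i ∈ Finset.univ.erase j1, t i = 0 :=
              Finset.sum_eq_zero (fun i hi => by have := h i hi; omega)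
            have := Finset.add_sum_erase Finset.univ t (Finset.mem_univ j1)
            omega
          obtain ⟨j2, hj2mem, hj2⟩ := hj2
          apply Dvd.dvd.mul_left
          refine (cpow_dvd hp hj2 (htp j2) ?_).trans (Finset.dvd_prod_of_mem _ hj2mem)
          calc p ≤ n := hnp
            _ ≤ n * t j2 := Nat.le_mul_of_pos_right n (by omega)
      rw [(CharP.cast_eq_zero_iff A p _).mpr hdvd, zero_mul]
      exact Submodule.zero_mem _
  refine ⟨hmulB, ?_⟩
  intro i hi a ha
  have key : a ∈ I ∧ ∀ n, 1 ≤ n → γ n a ∈ Submodule.span k S := by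
    induction ha using Submodule.span_induction with
    | mem x hx =>
      obtain ⟨t, htp, ht2, rfl⟩ := hx
      have hj0 : ∃ j0, 1 ≤ t j0 := by
        by_contra h
        push_neg at h
        have : ∑ i, t i = 0 := Finset.sum_eq_zero (fun i _ => by have := h i; omega)
        omega
      obtain ⟨j0, hj0⟩ := hj0
      constructor
      · rw [← Finset.mul_prod_erase Finset.univ _ (Finset.mem_univ j0)]
        exact I.mul_mem_right _ (hmem _ hj0 _ (hy j0))
      · exact fun n hn => hmono t htp ht2 n hn
    | zero =>
      refine ⟨I.zero_mem, fun n hn => ?_⟩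
      have h0 := hmul n 0 0 I.zero_mem
      rw [mul_zero, zero_pow (show n ≠ 0 by omega), zero_mul] at h0
      rw [h0]
      exact Submodule.zero_mem _
    | add x z hx hz ihx ihz =>
      obtain ⟨hxI, hxB⟩ := ihx
      obtain ⟨hzI, hzB⟩ := ihz
      refine ⟨I.add_mem hxI hzI, fun n hn => ?_⟩
      rw [hadd n x hxI z hzI]
      apply Submodule.sum_mem
      intro j hj
      have hjn : j ≤ n := Nat.lt_succ_iff.mp (Finset.mem_range.mp hj)
      rcases Nat.eq_zero_or_pos j with rfl | hj1
      · rw [hγ0 x hxI, one_mul, Nat.sub_zero]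
        exact hzB n hn
      · rcases eq_or_lt_of_le hjn with rfl | hlt
        · rw [Nat.sub_self, hγ0 z hzI, mul_one]
          exact hxB j hj1
        · exact hmulB _ (hxB j hj1) _ (hzB (n - j) (by omega))
    | smul c x hx ihx =>
      obtain ⟨hxI, hxB⟩ := ihx
      constructor
      · rw [Algebra.smul_def]
        exact I.mul_mem_left _ hxI
      · intro n hn
        rw [Algebra.smul_def, hmul n _ x hxI, ← map_pow, ← Algebra.smul_def]
        exact Submodule.smul_mem _ _ (hxB n hn)
  exact key.2 i hi
end
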